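/- Let G be a maximally connected graph (κ(G) = δ(G)) with |V(G)| ≥ 2(δ(G)−h)+1 and 0 ≤ h ≤ δ(G). Then the h-edge tolerable diagnosability of G under the PMC model equals δ(G) − h. -/

import Mathlib

open SimpleGraph Finset

variable {V : Type*}

/-- The vertex connectivity of a finite simple graph: the minimum size of a vertex set
whose removal leaves a graph that is disconnected or has at most one vertex. -/
noncomputable def vConn [Fintype V] (G : SimpleGraph V) : ℕ :=
  sInf {n | ∃ S : Finset V, S.card = n ∧
    (((↑S : Set V)ᶜ).Subsingleton ∨ ¬ (G.induce ((↑S : Set V)ᶜ)).Connected)}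

/-- A graph is $s$-diagnosable under the PMC model (Dahbura–Masson characterization). -/
def pmcDiagnosable [DecidableEq V] (G : SimpleGraph V) (s : ℕ) : Prop :=
  ∀ F1 F2 : Finset V, F1 ≠ F2 → F1.card ≤ s → F2.card ≤ s →
    ∃ u v : V, G.Adj u v ∧ u ∉ F1 ∪ F2 ∧ v ∈ (F1 \ F2) ∪ (F2 \ F1)

/-- The $h$-edge tolerable diagnosability under the PMC model. -/
noncomputable def pmcTolDiag [Fintype V] [DecidableEq V] (G : SimpleGraph V) (h : ℕ) : ℕ :=
  sSup {s | ∀ Fe : Finset (Sym2 V), ↑Fe ⊆ G.edgeSet → Fe.card ≤ h →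
    pmcDiagnosable (G.deleteEdges ↑Fe) s}

private lemma reach_inv {α : Type*} {H : SimpleGraph α} {P : α → Prop}
    (hP : ∀ x y, H.Adj x y → P x → P y) {a b : α} (r : H.Reachable a b) (ha : P a) : P b := by
  obtain ⟨w⟩ := r
  induction w with
  | nil => exact ha
  | cons hadj p ih => exact ih (hP _ _ hadj ha)

private lemma bad_exists [Fintype V] [DecidableEq V] (G : SimpleGraph V)
    [DecidableRel G.Adj] (h : ℕ) (hh : h ≤ G.minDegree) (hne : Nonempty V) :
    ∃ Fe : Finset (Sym2 V), ↑Fe ⊆ G.edgeSet ∧ Fe.card ≤ h ∧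
      ∃ F1 F2 : Finset V, F1 ≠ F2 ∧ F1.card ≤ G.minDegree - h + 1 ∧
        F2.card ≤ G.minDegree - h + 1 ∧
        ¬ ∃ u v : V, (G.deleteEdges ↑Fe).Adj u v ∧ u ∉ F1 ∪ F2 ∧
            v ∈ (F1 \ F2) ∪ (F2 \ F1) := by
  classical
  obtain ⟨v, hv⟩ := G.exists_minimal_degree_vertex
  have hinc : h ≤ (G.incidenceFinset v).card := by
    rw [G.card_incidenceFinset_eq_degree v]; omega
  obtain ⟨Fe, hFesub, hFecard⟩ := Finset.exists_subset_card_eq hinc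
  have hFeinc : ∀ e ∈ Fe, e ∈ G.edgeSet ∧ v ∈ e := by
    intro e he
    have := hFesub he
    rw [mem_incidenceFinset] at this
    exact this
  have hFeE : ↑Fe ⊆ G.edgeSet := fun e he => (hFeinc e he).1
  set M : Finset V := (G.neighborFinset v).filter (fun w => s(v, w) ∈ Fe) with hM
  set N : Finset V := (G.neighborFinset v).filter (fun w => s(v, w) ∉ Fe) with hN
  have hNcard : N.card ≤ G.minDegree - h := by
    have hsplit : M.card + N.card = G.degree v := by
      rw [hM, hN, Finset.card_filter_add_card_filter_not,
        SimpleGraph.card_neighborFinset_eq_degree]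
    have hMcard : h ≤ M.card := by
      rw [← hFecard]
      apply Finset.card_le_card_of_injOn (fun e => if he : v ∈ e then Sym2.Mem.other' he else v)
      · intro e he
        obtain ⟨heE, hve⟩ := hFeinc e he
        simp only [dif_pos hve]
        have hspec : s(v, Sym2.Mem.other' hve) = e := Sym2.other_spec' hve
        rw [hM, Finset.mem_coe, Finset.mem_filter, SimpleGraph.mem_neighborFinset]
        constructor
        · rw [← SimpleGraph.mem_edgeSet, hspec]; exact heE
        · rw [hspec]; exact he
      · intro e he e' he' heq
        obtain ⟨heE, hve⟩ := hFeinc e (by exact he)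
        obtain ⟨heE', hve'⟩ := hFeinc e' (by exact he')
        simp only [dif_pos hve, dif_pos hve'] at heq
        rw [← Sym2.other_spec' hve, ← Sym2.other_spec' hve', heq]
    omega
  have hvN : v ∉ N := by
    rw [hN]; simp
  refine ⟨Fe, hFeE, le_of_eq hFecard, N, insert v N, ?_, ?_, ?_, ?_⟩
  · intro heq
    exact hvN (heq ▸ Finset.mem_insert_self v N)
  · omega
  · rw [Finset.card_insert_of_notMem hvN]; omega
  · rintro ⟨u, w, hadj, hu, hw⟩
    have hwv : w = v := by
      rcases Finset.mem_union.1 hw with hw | hw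
      · exact absurd (Finset.mem_sdiff.1 hw).1
          (fun hx => (Finset.mem_sdiff.1 hw).2 (Finset.mem_insert_of_mem hx))
      · have := Finset.mem_sdiff.1 hw
        rcases Finset.mem_insert.1 this.1 with h1 | h1
        · exact h1
        · exact absurd h1 this.2
    subst hwv
    rw [SimpleGraph.deleteEdges_adj] at hadj
    have huN : u ∈ N := by
      rw [hN, Finset.mem_filter, SimpleGraph.mem_neighborFinset]
      refine ⟨hadj.1.symm, ?_⟩
      intro hmem
      exact hadj.2 (by rwa [Sym2.eq_swap] at hmem)
    exact hu (Finset.mem_union_left _ huN)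

private lemma diag_of_del [Fintype V] [DecidableEq V] (G : SimpleGraph V) [DecidableRel G.Adj]
    (hmax : vConn G = G.minDegree) (h : ℕ)
    (hV : 2 * (G.minDegree - h) + 1 ≤ Fintype.card V)
    (Fe : Finset (Sym2 V)) (hFeE : ↑Fe ⊆ G.edgeSet) (hFec : Fe.card ≤ h) :
    pmcDiagnosable (G.deleteEdges ↑Fe) (G.minDegree - h) := by
  classical
  intro F1 F2 hne h1 h2
  by_contra hcon
  push_neg at hcon
  -- reformulate: no G-edge avoiding Fe from outside F1 ∪ F2 into the symmetric difference
  have hnoedge : ∀ u w : V, G.Adj u w → s(u, w) ∉ Fe → u ∉ F1 ∪ F2 →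
      w ∉ (F1 \ F2) ∪ (F2 \ F1) := by
    intro u w hadj hfe hu
    exact hcon u w (by rw [SimpleGraph.deleteEdges_adj]; exact ⟨hadj, hfe⟩) hu
  set D : Finset V := (F1 \ F2) ∪ (F2 \ F1) with hD
  have hDne : D.Nonempty := by
    rw [Finset.nonempty_iff_ne_empty]
    intro hDe
    apply hne
    rw [hD, Finset.union_eq_empty, Finset.sdiff_eq_empty_iff_subset,
      Finset.sdiff_eq_empty_iff_subset] at hDe
    exact Finset.Subset.antisymm hDe.1 hDe.2
  have hDsub : D ⊆ F1 ∪ F2 := by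
    rw [hD]
    exact Finset.union_subset
      ((Finset.sdiff_subset).trans Finset.subset_union_left)
      ((Finset.sdiff_subset).trans Finset.subset_union_right)
  have hDint : ∀ x ∈ D, x ∉ F1 ∩ F2 := by
    intro x hx hxi
    rw [Finset.mem_inter] at hxi
    rw [hD, Finset.mem_union, Finset.mem_sdiff, Finset.mem_sdiff] at hx
    tauto
  have hδ : h < G.minDegree := by
    by_contra hle
    push_neg at hle
    have : G.minDegree - h = 0 := by omega
    rw [this, Nat.le_zero, Finset.card_eq_zero] at h1 h2
    exact hne (h1.trans h2.symm)
  have hc : (F1 ∩ F2).card + h + 1 ≤ G.minDegree := by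
    obtain ⟨x, hx⟩ := hDne
    rw [hD, Finset.mem_union] at hx
    rcases hx with hx | hx
    · rw [Finset.mem_sdiff] at hx
      have : (F1 ∩ F2).card < F1.card :=
        Finset.card_lt_card ⟨Finset.inter_subset_left,
          fun hsub => hx.2 (Finset.mem_inter.1 (hsub hx.1)).2⟩
      omega
    · rw [Finset.mem_sdiff] at hx
      have : (F1 ∩ F2).card < F2.card :=
        Finset.card_lt_card ⟨Finset.inter_subset_right,
          fun hsub => hx.2 (Finset.mem_inter.1 (hsub hx.1)).1⟩
      omega
  -- X : vertices of D having a G-neighbor outside F1 ∪ F2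
  set X : Finset V := D.filter (fun d => ∃ w, G.Adj d w ∧ w ∉ F1 ∪ F2) with hX
  have hXD : X ⊆ D := Finset.filter_subset _ _
  have hedge_mem : ∀ d ∈ D, ∀ w, G.Adj d w → w ∉ F1 ∪ F2 → s(d, w) ∈ Fe := by
    intro d hd w hadj hw
    by_contra hfe
    exact hnoedge w d hadj.symm (by rwa [Sym2.eq_swap] at hfe) hw (hD ▸ hd)
  have hXcard : X.card ≤ h := by
    refine le_trans ?_ hFec
    have hch : ∀ d, d ∈ X → (∃ w, G.Adj d w ∧ w ∉ F1 ∪ F2) := fun d hd =>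
      (Finset.mem_filter.1 hd).2
    refine Finset.card_le_card_of_injOn
      (fun d => if hd : ∃ w, G.Adj d w ∧ w ∉ F1 ∪ F2 then s(d, hd.choose) else s(d, d)) ?_ ?_
    · intro d hd
      have hex := hch d hd
      simp only [dif_pos hex]
      exact hedge_mem d (hXD hd) _ hex.choose_spec.1 hex.choose_spec.2
    · intro d hd d' hd' heq
      have hex := hch d hd
      have hex' := hch d' hd'
      simp only [dif_pos hex, dif_pos hex'] at heq
      rw [Sym2.eq_iff] at heq
      rcases heq with ⟨h1, _⟩ | ⟨h1, h2⟩
      · exact h1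
      · exact absurd (h1 ▸ hDsub (hXD hd)) hex'.choose_spec.2
  by_cases hcase : (D \ X).Nonempty
  · -- separator argument
    obtain ⟨d0, hd0⟩ := hcase
    rw [Finset.mem_sdiff] at hd0
    set S : Finset V := (F1 ∩ F2) ∪ X with hS
    have hScard : S.card < G.minDegree := by
      have := Finset.card_union_le (F1 ∩ F2) X
      rw [← hS] at this
      omega
    -- a vertex outside F1 ∪ F2 exists
    have hWne : ∃ w0, w0 ∉ F1 ∪ F2 := by
      by_contra hall
      push_neg at hall
      have : F1 ∪ F2 = Finset.univ := Finset.eq_univ_iff_forall.2 hall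
      have hcard : (F1 ∪ F2).card ≤ F1.card + F2.card := Finset.card_union_le _ _
      rw [this, Finset.card_univ] at hcard
      omega
    obtain ⟨w0, hw0⟩ := hWne
    have hw0S : (w0 : V) ∈ ((↑S : Set V)ᶜ) := by
      intro hw
      rw [Finset.mem_coe, hS, Finset.mem_union] at hw
      rcases hw with hw | hw
      · exact hw0 (Finset.mem_union_left _ (Finset.mem_inter.1 hw).1)
      · exact hw0 (hDsub (hXD hw))
    have hd0S : (d0 : V) ∈ ((↑S : Set V)ᶜ) := by
      intro hw
      rw [Finset.mem_coe, hS, Finset.mem_union] at hw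
      rcases hw with hw | hw
      · exact hDint d0 hd0.1 hw
      · exact hd0.2 hw
    have hdis : ¬ (G.induce ((↑S : Set V)ᶜ)).Connected := by
      intro hconn
      have hreach := hconn.preconnected ⟨w0, hw0S⟩ ⟨d0, hd0S⟩
      have hP : ∀ x y : ((↑S : Set V)ᶜ : Set V),
          (G.induce ((↑S : Set V)ᶜ)).Adj x y → (x : V) ∉ F1 ∪ F2 → (y : V) ∉ F1 ∪ F2 := by
        rintro ⟨x, hxS⟩ ⟨y, hyS⟩ hxy hx hy
        have hGxy : G.Adj x y := hxy
        -- y ∈ F1 ∪ F2 but y ∉ S, so y ∈ D, and y has neighbor x outside, so y ∈ X ⊆ S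
        have hyD : y ∈ D := by
          rw [hD, Finset.mem_union, Finset.mem_sdiff, Finset.mem_sdiff]
          have hyI : y ∉ F1 ∩ F2 := by
            intro hyi
            exact hyS (Finset.mem_coe.2 (by rw [hS, Finset.mem_union]; exact Or.inl hyi))
          rw [Finset.mem_inter] at hyI
          rw [Finset.mem_union] at hy
          tauto
        have hyX : y ∈ X := by
          rw [hX, Finset.mem_filter]
          exact ⟨hyD, x, hGxy.symm, hx⟩
        exact hyS (Finset.mem_coe.2 (by rw [hS, Finset.mem_union]; exact Or.inr hyX))
      have : (d0 : V) ∉ F1 ∪ F2 := reach_inv hP hreach hw0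
      exact this (hDsub hd0.1)
    have hvle : vConn G ≤ S.card :=
      Nat.sInf_le ⟨S, rfl, Or.inr hdis⟩
    rw [hmax] at hvle
    omega
  · -- counting argument: every vertex of D has all outside edges in Fe
    rw [Finset.not_nonempty_iff_eq_empty, Finset.sdiff_eq_empty_iff_subset] at hcase
    have hDX : D = X := Finset.Subset.antisymm hcase hXD
    have hd1 : 1 ≤ D.card := Finset.card_pos.2 hDne
    have hdh : D.card ≤ h := hDX ▸ hXcard
    set Eu : V → Finset (Sym2 V) :=
      fun u => Fe.filter (fun e => ∃ w, w ∉ F1 ∪ F2 ∧ e = s(u, w)) with hEu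
    have hdeg : ∀ u ∈ D, G.minDegree + 1 ≤ (F1 ∪ F2).card + (Eu u).card := by
      intro u hu
      have huU : u ∈ F1 ∪ F2 := hDsub hu
      set A : Finset V := (G.neighborFinset u).filter (· ∈ F1 ∪ F2) with hA
      set B : Finset V := (G.neighborFinset u).filter (· ∉ F1 ∪ F2) with hB
      have hsplit : A.card + B.card = G.degree u := by
        rw [hA, hB, Finset.card_filter_add_card_filter_not,
          SimpleGraph.card_neighborFinset_eq_degree]
      have hAcard : A.card ≤ (F1 ∪ F2).card - 1 := by
        have hsub : A ⊆ (F1 ∪ F2).erase u := by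
          intro a ha
          rw [hA, Finset.mem_filter, SimpleGraph.mem_neighborFinset] at ha
          exact Finset.mem_erase.2 ⟨ha.1.ne', ha.2⟩
        calc A.card ≤ ((F1 ∪ F2).erase u).card := Finset.card_le_card hsub
          _ = (F1 ∪ F2).card - 1 := Finset.card_erase_of_mem huU
      have hBcard : B.card ≤ (Eu u).card := by
        refine Finset.card_le_card_of_injOn (fun w => s(u, w)) ?_ ?_
        · intro w hw
          simp only [hB, Finset.mem_coe, Finset.mem_filter,
            SimpleGraph.mem_neighborFinset] at hw
          simp only [hEu, Finset.mem_coe, Finset.mem_filter]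
          exact ⟨hedge_mem u hu w hw.1 hw.2, w, hw.2, rfl⟩
        · intro w hw w' hw' heq
          rw [Sym2.eq_iff] at heq
          rcases heq with ⟨_, h2⟩ | ⟨h1, h2⟩
          · exact h2
          · exact h2.trans h1
      have hmin : G.minDegree ≤ G.degree u := G.minDegree_le_degree u
      have hU1 : 1 ≤ (F1 ∪ F2).card := Finset.card_pos.2 ⟨u, huU⟩
      omega
    have hsum : ∑ u ∈ D, (Eu u).card ≤ h := by
      have hdisj : ∀ u ∈ D, ∀ u' ∈ D, u ≠ u' → Disjoint (Eu u) (Eu u') := by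
        intro u hu u' hu' hne'
        rw [Finset.disjoint_left]
        intro e he he'
        simp only [hEu, Finset.mem_filter] at he he'
        obtain ⟨_, w, hw, rfl⟩ := he
        obtain ⟨_, w', hw', heq⟩ := he'
        rw [Sym2.eq_iff] at heq
        rcases heq with ⟨h1, _⟩ | ⟨h1, h2⟩
        · exact hne' h1
        · exact hw' (h1 ▸ hDsub hu)
      calc ∑ u ∈ D, (Eu u).card = (D.biUnion Eu).card := (Finset.card_biUnion hdisj).symm
        _ ≤ Fe.card := Finset.card_le_card (by
            intro e he
            rw [Finset.mem_biUnion] at he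
            obtain ⟨u, _, he⟩ := he
            exact (Finset.mem_filter.1 he).1)
        _ ≤ h := hFec
    have hunion : (F1 ∪ F2).card ≤ (F1 ∩ F2).card + D.card := by
      have hsub : F1 ∪ F2 ⊆ (F1 ∩ F2) ∪ D := by
        intro x hx
        rw [Finset.mem_union]
        by_cases hxi : x ∈ F1 ∩ F2
        · exact Or.inl hxi
        · refine Or.inr ?_
          rw [hD, Finset.mem_union, Finset.mem_sdiff, Finset.mem_sdiff]
          rw [Finset.mem_inter] at hxi
          rw [Finset.mem_union] at hx
          tauto
      calc (F1 ∪ F2).card ≤ ((F1 ∩ F2) ∪ D).card := Finset.card_le_card hsub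
        _ ≤ (F1 ∩ F2).card + D.card := Finset.card_union_le _ _
    -- summing the degree bounds
    have hbig : D.card * (G.minDegree + 1) ≤ D.card * ((F1 ∩ F2).card + D.card) + h := by
      calc D.card * (G.minDegree + 1) = ∑ _u ∈ D, (G.minDegree + 1) := by
            rw [Finset.sum_const, smul_eq_mul]
        _ ≤ ∑ u ∈ D, ((F1 ∪ F2).card + (Eu u).card) := Finset.sum_le_sum hdeg
        _ = D.card * (F1 ∪ F2).card + ∑ u ∈ D, (Eu u).card := by
            rw [Finset.sum_add_distrib, Finset.sum_const, smul_eq_mul]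
        _ ≤ D.card * ((F1 ∩ F2).card + D.card) + h :=
            Nat.add_le_add (Nat.mul_le_mul_left _ hunion) hsum
    -- final contradiction
    set c := (F1 ∩ F2).card
    set d := D.card
    have hz : (d : ℤ) * (G.minDegree + 1) ≤ d * (c + d) + h := by exact_mod_cast hbig
    have hcz : (c : ℤ) + h + 1 ≤ G.minDegree := by exact_mod_cast hc
    have hd1z : (1 : ℤ) ≤ d := by exact_mod_cast hd1
    have hdhz : (d : ℤ) ≤ h := by exact_mod_cast hdh
    nlinarith [mul_nonneg (sub_nonneg.2 hd1z) (sub_nonneg.2 hdhz)]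

/-- A maximally connected graph $G$ with enough vertices has $t_h^e(G) = δ(G) - h$
under the PMC model. -/
theorem pmc_maximally_connected [Fintype V] [DecidableEq V] (G : SimpleGraph V)
    [DecidableRel G.Adj] (hmax : vConn G = G.minDegree) (h : ℕ)
    (hh : h ≤ G.minDegree) (hV : 2 * (G.minDegree - h) + 1 ≤ Fintype.card V) :
    pmcTolDiag G h = G.minDegree - h := by
  classical
  have hnv : Nonempty V := Fintype.card_pos_iff.1 (by omega)
  have hub : ∀ s ∈ {s | ∀ Fe : Finset (Sym2 V), ↑Fe ⊆ G.edgeSet → Fe.card ≤ h →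
      pmcDiagnosable (G.deleteEdges ↑Fe) s}, s ≤ G.minDegree - h := by
    intro s hs
    by_contra hgt
    push_neg at hgt
    obtain ⟨Fe, hE, hc, F1, F2, hne12, h1, h2, hbad⟩ := bad_exists G h hh hnv
    obtain ⟨u, v, hadj, hu, hv⟩ := hs Fe hE hc F1 F2 hne12 (by omega) (by omega)
    exact hbad ⟨u, v, hadj, hu, hv⟩
  have hmem : G.minDegree - h ∈ {s | ∀ Fe : Finset (Sym2 V), ↑Fe ⊆ G.edgeSet → Fe.card ≤ h →
      pmcDiagnosable (G.deleteEdges ↑Fe) s} :=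
    fun Fe hE hc => diag_of_del G hmax h hV Fe hE hc
  exact le_antisymm (csSup_le ⟨_, hmem⟩ hub) (le_csSup ⟨_, hub⟩ hmem)
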